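/- Let k < n/2 and let (Y, Z) be any partition of the n variables of the cardinality constraint C_n^k with n/3 ≤ |Y| ≤ 2n/3. Then every rectangle cover of C_n^k respecting (Y, Z) has size at least min(k, n/3) + 1. -/

import Mathlib

/-- A predicate on assignments depends only on the variables in `S` if its
value is unchanged by modifications outside `S`. -/
def DependsOnVars {V : Type} (r : (V → Bool) → Prop) (S : Set V) : Prop :=
  ∀ a b : V → Bool, (∀ v ∈ S, a v = b v) → (r a ↔ r b)

/-- The cardinality constraint C_n^k: at most k of the n variables are true. -/
def CardLE (n k : ℕ) (a : Fin n → Bool) : Prop :=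
  (Finset.univ.filter fun i => a i = true).card ≤ k

/-- For k < n/2 and any partition (Y, Z) with n/3 ≤ |Y| ≤ 2n/3, every
rectangle cover of C_n^k respecting (Y, Z) has size at least min(k, n/3)+1. -/
theorem stmt6 (n k s : ℕ) (hk : 2 * k < n)
    (Y : Finset (Fin n)) (hY1 : n ≤ 3 * Y.card) (hY2 : 3 * Y.card ≤ 2 * n)
    (r1 r2 : Fin s → (Fin n → Bool) → Prop)
    (hdep : ∀ i, DependsOnVars (r1 i) ↑Y ∧ DependsOnVars (r2 i) (↑Y : Set (Fin n))ᶜ)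
    (hcover : ∀ a, CardLE n k a ↔ ∃ i, r1 i a ∧ r2 i a) :
    min k (n / 3) + 1 ≤ s := by
  set t := min k (n / 3) with ht
  have htk : t ≤ k := min_le_left _ _
  have h3t : 3 * t ≤ n := by
    have h1 : t ≤ n / 3 := min_le_right _ _
    have h2 : n / 3 * 3 ≤ n := Nat.div_mul_le_self n 3
    omega
  have hYZ : Y.card + Yᶜ.card = n := by simpa using Finset.card_add_card_compl Y
  set lo := k - Yᶜ.card with hlo
  -- key size bounds for indices i ≤ t
  have hbound : ∀ i : ℕ, i ≤ t → lo + i ≤ Y.card ∧ lo + i ≤ k ∧ k - (lo + i) ≤ Yᶜ.card := by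
    intro i hi; omega
  -- choose subsets
  have hA : ∀ i : Fin (t + 1), ∃ A ⊆ Y, A.card = lo + i.val := by
    intro i
    exact Finset.exists_subset_card_eq (hbound i.val (Nat.lt_succ_iff.mp i.isLt)).1
  have hB : ∀ i : Fin (t + 1), ∃ B ⊆ Yᶜ, B.card = k - (lo + i.val) := by
    intro i
    exact Finset.exists_subset_card_eq (hbound i.val (Nat.lt_succ_iff.mp i.isLt)).2.2
  choose A hAY hAcard using hA
  choose B hBZ hBcard using hB
  have hBnotY : ∀ i v, v ∈ B i → v ∉ Y := by
    intro i v hv; simpa using hBZ i hv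
  -- the assignments
  set a : Fin (t + 1) → Fin n → Bool := fun i v => decide (v ∈ A i ∪ B i) with ha
  have hdisj : ∀ i i' : Fin (t + 1), Disjoint (A i) (B i') := by
    intro i i'
    rw [Finset.disjoint_left]
    intro v hv hv'
    exact hBnotY i' v hv' (hAY i hv)
  have hcardU : ∀ i i' : Fin (t + 1),
      (A i ∪ B i').card = (lo + i.val) + (k - (lo + i'.val)) := by
    intro i i'
    rw [Finset.card_union_of_disjoint (hdisj i i'), hAcard, hBcard]
  have hcardle : ∀ i : Fin (t + 1), CardLE n k (a i) := by
    intro i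
    unfold CardLE
    have : (Finset.univ.filter fun v => a i v = true) = A i ∪ B i := by
      ext v; simp [ha]
    rw [this, hcardU]
    have := (hbound i.val (Nat.lt_succ_iff.mp i.isLt)).2.1
    omega
  -- each assignment is in some rectangle
  have hj : ∀ i : Fin (t + 1), ∃ j : Fin s, r1 j (a i) ∧ r2 j (a i) := by
    intro i; exact (hcover (a i)).mp (hcardle i)
  choose j hj1 hj2 using hj
  -- no rectangle contains two of them
  have hkey : ∀ i i' : Fin (t + 1), i < i' → j i ≠ j i' := by
    intro i i' hlt hjeq
    set c : Fin n → Bool := fun v => if v ∈ Y then a i' v else a i v with hc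
    have hr1 : r1 (j i) c := by
      have := (hdep (j i)).1 c (a i') (by intro v hv; simp [hc, hv, Finset.mem_coe.mp hv])
      rw [this]; rw [hjeq]; exact hj1 i'
    have hr2 : r2 (j i) c := by
      have := (hdep (j i)).2 c (a i) (by
        intro v hv
        have hv' : v ∉ Y := by simpa using hv
        simp [hc, hv'])
      rw [this]; exact hj2 i
    have hcc : CardLE n k c := (hcover c).mpr ⟨j i, hr1, hr2⟩
    have hfil : (Finset.univ.filter fun v => c v = true) = A i' ∪ B i := by
      ext v
      by_cases hv : v ∈ Y
      · have hB1 : v ∉ B i := fun h => hBnotY i v h hv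
        have hB2 : v ∉ B i' := fun h => hBnotY i' v h hv
        simp [hc, hv, ha, hB1, hB2]
      · have hA1 : v ∉ A i := fun h => hv (hAY i h)
        have hA2 : v ∉ A i' := fun h => hv (hAY i' h)
        simp [hc, hv, ha, hA1, hA2]
    unfold CardLE at hcc
    rw [hfil, hcardU] at hcc
    have h1 := (hbound i'.val (Nat.lt_succ_iff.mp i'.isLt)).2.1
    have h2 := (hbound i.val (Nat.lt_succ_iff.mp i.isLt)).2.1
    have : i.val < i'.val := hlt
    omega
  have hinj : Function.Injective j := by
    intro i i' h
    by_contra hne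
    rcases lt_or_gt_of_ne hne with hlt | hlt
    · exact hkey i i' hlt h
    · exact hkey i' i hlt h.symm
  have := Fintype.card_le_of_injective j hinj
  simpa using this
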